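/- arXiv:1602.01297 — 2 statements merged into one kernel-verified Lean document; each statement's English description precedes it below -/
import Mathlib

section
/- Let G be a group, H a normal subgroup of index 2 generated together with an element ε of G with ε² = 1, ε ∉ H. Let σ₀ be a finite-dimensional irreducible representation of H with σ₀^ε ≅ σ₀ (where σ₀^ε(h) = σ₀(ε⁻¹hε)), and suppose U ≤ H is a subgroup normalized by ε, μ a character of U fixed by conjugation by ε, with dim Hom_U(σ₀, μ) = 1. If σ₁, σ₂ are the two extensions of σ₀ to G, then exactly one of σ₁, σ₂ admits a nonzero U⟨ε⟩-equivariant functional for the extension μ⁺ of μ with μ⁺(ε) = 1, and the other admits one for the extension μ⁻ with μ⁻(ε) = -1. -/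
def IsIrredRep {k G V : Type*} [CommSemiring k] [Monoid G] [AddCommMonoid V] [Module k V]
    (σ : Representation k G V) : Prop :=
  ∀ p : Submodule k V, (∀ g v, v ∈ p → σ g v ∈ p) → p = ⊥ ∨ p = ⊤

def HasEqFunc {G V : Type*} [Group G] [AddCommGroup V] [Module ℂ V]
    (σ : Representation ℂ G V) (U : Subgroup G) (μ : U →* ℂˣ) (ε : G) (sgn : ℂ) : Prop :=
  ∃ ℓ : V →ₗ[ℂ] ℂ, ℓ ≠ 0 ∧
    (∀ (u : U) (v : V), ℓ (σ (u : G) v) = (μ u : ℂ) * ℓ v) ∧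
    ∀ v : V, ℓ (σ ε v) = sgn * ℓ v

lemma schur_scalar {M V : Type*} [Monoid M] [AddCommGroup V] [Module ℂ V]
    [FiniteDimensional ℂ V] [Nontrivial V]
    (σ : Representation ℂ M V) (hirr : IsIrredRep σ)
    (T : Module.End ℂ V) (hT : ∀ m, T * σ m = σ m * T) :
    ∃ c : ℂ, T = c • (1 : Module.End ℂ V) := by
  obtain ⟨c, hc⟩ := Module.End.exists_eigenvalue T
  refine ⟨c, ?_⟩
  have hinv : ∀ g v, v ∈ Module.End.eigenspace T c → σ g v ∈ Module.End.eigenspace T c := by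
    intro g v hv
    rw [Module.End.mem_eigenspace_iff] at hv ⊢
    have h2 := congrArg (fun f : Module.End ℂ V => f v) (hT g)
    simp only [Module.End.mul_apply] at h2
    rw [h2, hv, map_smul]
  rcases hirr _ hinv with h | h
  · exact absurd h hc
  · ext v
    have : v ∈ Module.End.eigenspace T c := h ▸ Submodule.mem_top
    simpa [Module.End.mem_eigenspace_iff] using this

/-- with `G = H⟨ε⟩`, `ε² = 1`, `σ₀` irreducible with a one-dimensional
space of `(U,μ)`-equivariant functionals, exactly one of the two extensions `σ₁, σ₂`
of `σ₀` to `G` admits a nonzero `μ⁺`-functional (with `μ⁺(ε) = 1`), and the other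
admits a nonzero `μ⁻`-functional (with `μ⁻(ε) = -1`). -/
theorem stmt2 {G V : Type*} [Group G] [AddCommGroup V] [Module ℂ V]
    [FiniteDimensional ℂ V] [Nontrivial V]
    (H : Subgroup G) [H.Normal] (hidx : H.index = 2)
    (ε : G) (hεH : ε ∉ H) (hε2 : ε * ε = 1)
    (σ₀ : Representation ℂ H V) (hirr₀ : IsIrredRep σ₀)
    (U : Subgroup G) (hUH : U ≤ H)
    (hUnorm : ∀ u ∈ U, ε⁻¹ * u * ε ∈ U)
    (μ : U →* ℂˣ)
    (hμε : ∀ (u : G) (hu : u ∈ U) (hu' : ε⁻¹ * u * ε ∈ U),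
      μ ⟨ε⁻¹ * u * ε, hu'⟩ = μ ⟨u, hu⟩)
    (hdim : ∃ ℓ₀ : V →ₗ[ℂ] ℂ, ℓ₀ ≠ 0 ∧
      (∀ (u : U) (v : V), ℓ₀ (σ₀ ⟨(u : G), hUH u.2⟩ v) = (μ u : ℂ) * ℓ₀ v) ∧
      ∀ ℓ : V →ₗ[ℂ] ℂ,
        (∀ (u : U) (v : V), ℓ (σ₀ ⟨(u : G), hUH u.2⟩ v) = (μ u : ℂ) * ℓ v) →
        ∃ a : ℂ, ℓ = a • ℓ₀)
    (σ₁ σ₂ : Representation ℂ G V)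
    (hext₁ : ∀ h : H, σ₁ (h : G) = σ₀ h) (hext₂ : ∀ h : H, σ₂ (h : G) = σ₀ h)
    (hne : σ₁ ≠ σ₂) :
    (HasEqFunc σ₁ U μ ε 1 ∧ HasEqFunc σ₂ U μ ε (-1) ∧
      ¬ HasEqFunc σ₁ U μ ε (-1) ∧ ¬ HasEqFunc σ₂ U μ ε 1) ∨
    (HasEqFunc σ₂ U μ ε 1 ∧ HasEqFunc σ₁ U μ ε (-1) ∧
      ¬ HasEqFunc σ₂ U μ ε (-1) ∧ ¬ HasEqFunc σ₁ U μ ε 1) := by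
  have hεinv : ε⁻¹ = ε := inv_eq_of_mul_eq_one_right hε2
  -- σ₁ ε squares to 1
  have hsq₁ : σ₁ ε * σ₁ ε = 1 := by rw [← map_mul, hε2, map_one]
  have hsq₂ : σ₂ ε * σ₂ ε = 1 := by rw [← map_mul, hε2, map_one]
  -- Step 1: σ₂ ε = c • σ₁ ε with c = -1.
  have hcomm : ∀ h : H, (σ₁ ε * σ₂ ε) * σ₀ h = σ₀ h * (σ₁ ε * σ₂ ε) := by
    intro h
    have hmem : ε * (h : G) * ε⁻¹ ∈ H := Subgroup.Normal.conj_mem ‹H.Normal› h h.2 ε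
    have e1 : σ₂ (ε * (h : G)) = σ₀ ⟨ε * h * ε⁻¹, hmem⟩ * σ₂ ε := by
      rw [← hext₂, ← map_mul]
      congr 1
      group
    have e2 : σ₁ ε * σ₁ ((⟨ε * h * ε⁻¹, hmem⟩ : H) : G) = σ₁ ((h : G) * ε) := by
      rw [← map_mul]
      congr 1
      show ε * (ε * (h : G) * ε⁻¹) = (h : G) * ε
      rw [show ε * (ε * (h : G) * ε⁻¹) = (ε * ε) * ((h : G) * ε⁻¹) by group, hε2, one_mul, hεinv]
    calc (σ₁ ε * σ₂ ε) * σ₀ h = σ₁ ε * (σ₂ ε * σ₂ (h : G)) := by rw [hext₂, mul_assoc]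
    _ = σ₁ ε * σ₂ (ε * (h : G)) := by rw [← map_mul]
    _ = σ₁ ε * (σ₀ ⟨ε * h * ε⁻¹, hmem⟩ * σ₂ ε) := by rw [e1]
    _ = (σ₁ ε * σ₁ ((⟨ε * h * ε⁻¹, hmem⟩ : H) : G)) * σ₂ ε := by rw [hext₁, ← mul_assoc]
    _ = σ₁ ((h : G) * ε) * σ₂ ε := by rw [e2]
    _ = σ₀ h * (σ₁ ε * σ₂ ε) := by rw [map_mul, hext₁, mul_assoc]
  obtain ⟨c, hc⟩ := schur_scalar σ₀ hirr₀ _ hcomm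
  have hE : σ₂ ε = c • σ₁ ε := by
    have := congrArg (fun f => σ₁ ε * f) hc
    simp only [← mul_assoc, hsq₁, one_mul] at this
    rw [this]
    ext v
    simp
  -- c² = 1
  obtain ⟨v₀, hv₀⟩ := exists_ne (0 : V)
  have hc2 : c * c = 1 := by
    have h1 : (σ₂ ε * σ₂ ε) v₀ = v₀ := by rw [hsq₂]; rfl
    rw [hE] at h1
    simp only [Module.End.mul_apply, LinearMap.smul_apply, map_smul, smul_smul] at h1
    have h2 : (σ₁ ε * σ₁ ε) v₀ = v₀ := by rw [hsq₁]; rfl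
    simp only [Module.End.mul_apply] at h2
    rw [h2] at h1
    have h3 : ((c * c) - 1) • v₀ = 0 := by rw [sub_smul, one_smul, h1, sub_self]
    rcases smul_eq_zero.mp h3 with h | h
    · linear_combination h
    · exact absurd h hv₀
  -- c ≠ 1
  have hcne : c ≠ 1 := by
    intro h1
    apply hne
    apply MonoidHom.ext
    intro g
    by_cases hg : g ∈ H
    · rw [show g = ((⟨g, hg⟩ : H) : G) from rfl, hext₁, hext₂]
    · have hgε : g * ε ∈ H := by
        rw [Subgroup.mul_mem_iff_of_index_two hidx]
        simp [hg, hεH]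
      have hdec : g = ((⟨g * ε, hgε⟩ : H) : G) * ε := by
        show g = (g * ε) * ε
        rw [mul_assoc, hε2, mul_one]
      calc σ₁ g = σ₁ ((⟨g * ε, hgε⟩ : H) : G) * σ₁ ε := by rw [← map_mul, ← hdec]
      _ = σ₀ ⟨g * ε, hgε⟩ * σ₁ ε := by rw [hext₁]
      _ = σ₂ ((⟨g * ε, hgε⟩ : H) : G) * σ₂ ε := by rw [hext₂, hE, h1, one_smul]
      _ = σ₂ g := by rw [← map_mul, ← hdec]
  have hcm1 : c = -1 := by
    have hfac : (c - 1) * (c + 1) = 0 := by linear_combination hc2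
    rcases mul_eq_zero.mp hfac with h | h
    · exact absurd (sub_eq_zero.mp h) hcne
    · exact eq_neg_of_add_eq_zero_left h
  have hE2 : ∀ v : V, σ₂ ε v = -(σ₁ ε v) := by
    intro v
    rw [hE, hcm1]
    simp
  -- restrictions to U agree with σ₀
  have hres₁ : ∀ (u : U) (v : V), σ₁ (u : G) v = σ₀ ⟨(u : G), hUH u.2⟩ v := by
    intro u v
    show σ₁ (((⟨(u : G), hUH u.2⟩ : H)) : G) v = _
    rw [hext₁]
  have hres₂ : ∀ (u : U) (v : V), σ₂ (u : G) v = σ₀ ⟨(u : G), hUH u.2⟩ v := by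
    intro u v
    show σ₂ (((⟨(u : G), hUH u.2⟩ : H)) : G) v = _
    rw [hext₂]
  obtain ⟨ℓ₀, hℓ₀ne, hℓ₀eq, hℓ₀span⟩ := hdim
  have exists_val : ∀ ℓ : V →ₗ[ℂ] ℂ, ℓ ≠ 0 → ∃ v, ℓ v ≠ 0 := by
    intro ℓ hℓ
    by_contra h
    push_neg at h
    exact hℓ (LinearMap.ext fun v => h v)
  -- ℓ₀ ∘ σ₁ ε is again a μ-functional on σ₀
  have hℓ'eq : ∀ (u : U) (v : V),
      (ℓ₀ ∘ₗ (σ₁ ε)) (σ₀ ⟨(u : G), hUH u.2⟩ v) = (μ u : ℂ) * (ℓ₀ ∘ₗ (σ₁ ε)) v := by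
    intro u v
    have m1 : ε⁻¹ * (u : G) * ε ∈ U := hUnorm _ u.2
    have key : ε * (u : G) = (ε⁻¹ * (u : G) * ε) * ε := by
      rw [hεinv, mul_assoc (ε * (u : G)) ε ε, hε2, mul_one]
    have hμw : (μ ⟨ε⁻¹ * (u : G) * ε, m1⟩ : ℂ) = (μ u : ℂ) := by
      rw [hμε (u : G) u.2 m1]
    calc (ℓ₀ ∘ₗ (σ₁ ε)) (σ₀ ⟨(u : G), hUH u.2⟩ v)
        = ℓ₀ (σ₁ ε (σ₁ (u : G) v)) := by rw [LinearMap.comp_apply, hres₁]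
      _ = ℓ₀ (σ₁ (ε * (u : G)) v) := by rw [map_mul]; rfl
      _ = ℓ₀ (σ₁ ((ε⁻¹ * (u : G) * ε) * ε) v) := by rw [← key]
      _ = ℓ₀ (σ₁ ((⟨ε⁻¹ * (u : G) * ε, m1⟩ : U) : G) (σ₁ ε v)) := by rw [map_mul]; rfl
      _ = ℓ₀ (σ₀ ⟨((⟨ε⁻¹ * (u : G) * ε, m1⟩ : U) : G), hUH m1⟩ (σ₁ ε v)) := by rw [hres₁]
      _ = (μ ⟨ε⁻¹ * (u : G) * ε, m1⟩ : ℂ) * ℓ₀ (σ₁ ε v) := hℓ₀eq _ _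
      _ = (μ u : ℂ) * (ℓ₀ ∘ₗ (σ₁ ε)) v := by rw [hμw]; rfl
  obtain ⟨a, ha⟩ := hℓ₀span _ hℓ'eq
  have hεact : ∀ v : V, ℓ₀ (σ₁ ε v) = a * ℓ₀ v := by
    intro v
    have := congrArg (fun f : V →ₗ[ℂ] ℂ => f v) ha
    simpa using this
  -- a² = 1
  obtain ⟨w₀, hw₀⟩ := exists_val ℓ₀ hℓ₀ne
  have ha2 : a * a = 1 := by
    have e2 : (σ₁ ε) ((σ₁ ε) w₀) = w₀ := by
      have := congrArg (fun f : Module.End ℂ V => f w₀) hsq₁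
      simpa using this
    have e : ℓ₀ w₀ = a * (a * ℓ₀ w₀) := by
      conv_lhs => rw [← e2, hεact, hεact]
    have e3 : (a * a - 1) * ℓ₀ w₀ = 0 := by linear_combination -e
    rcases mul_eq_zero.mp e3 with h | h
    · linear_combination h
    · exact absurd h hw₀
  -- uniqueness of signs
  have huniq₁ : ∀ s : ℂ, HasEqFunc σ₁ U μ ε s → s = a := by
    rintro s ⟨ℓ, hne', hU', hε'⟩
    have hμf : ∀ (u : U) (v : V), ℓ (σ₀ ⟨(u : G), hUH u.2⟩ v) = (μ u : ℂ) * ℓ v := by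
      intro u v
      rw [← hres₁]
      exact hU' u v
    obtain ⟨b, hb⟩ := hℓ₀span ℓ hμf
    obtain ⟨v, hv⟩ := exists_val ℓ hne'
    have e1 : ℓ (σ₁ ε v) = s * ℓ v := hε' v
    have e2 : ℓ (σ₁ ε v) = a * ℓ v := by
      rw [hb]
      simp only [LinearMap.smul_apply, smul_eq_mul, hεact]
      ring
    have e3 : (s - a) * ℓ v = 0 := by linear_combination e2 - e1
    rcases mul_eq_zero.mp e3 with h | h
    · exact sub_eq_zero.mp h
    · exact absurd h hv
  have huniq₂ : ∀ s : ℂ, HasEqFunc σ₂ U μ ε s → s = -a := by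
    rintro s ⟨ℓ, hne', hU', hε'⟩
    have hμf : ∀ (u : U) (v : V), ℓ (σ₀ ⟨(u : G), hUH u.2⟩ v) = (μ u : ℂ) * ℓ v := by
      intro u v
      rw [← hres₂]
      exact hU' u v
    obtain ⟨b, hb⟩ := hℓ₀span ℓ hμf
    obtain ⟨v, hv⟩ := exists_val ℓ hne'
    have e1 : ℓ (σ₂ ε v) = s * ℓ v := hε' v
    have e2 : ℓ (σ₂ ε v) = -a * ℓ v := by
      rw [hE2, map_neg, hb]
      simp only [LinearMap.smul_apply, smul_eq_mul, hεact]
      ring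
    have e3 : (s - (-a)) * ℓ v = 0 := by linear_combination e2 - e1
    rcases mul_eq_zero.mp e3 with h | h
    · exact sub_eq_zero.mp h
    · exact absurd h hv
  -- existence
  have hhas₁ : HasEqFunc σ₁ U μ ε a :=
    ⟨ℓ₀, hℓ₀ne, fun u v => by rw [hres₁]; exact hℓ₀eq u v, hεact⟩
  have hhas₂ : HasEqFunc σ₂ U μ ε (-a) :=
    ⟨ℓ₀, hℓ₀ne, fun u v => by rw [hres₂]; exact hℓ₀eq u v, fun v => by
      rw [hE2, map_neg, hεact]; ring⟩
  have hfac : (a - 1) * (a + 1) = 0 := by linear_combination ha2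
  rcases mul_eq_zero.mp hfac with h | h
  · have ha1 : a = 1 := sub_eq_zero.mp h
    left
    refine ⟨ha1 ▸ hhas₁, by rw [← ha1]; exact hhas₂, ?_, ?_⟩
    · intro hh
      have := huniq₁ _ hh
      rw [ha1] at this
      norm_num at this
    · intro hh
      have := huniq₂ _ hh
      rw [ha1] at this
      norm_num at this
  · have ha1 : a = -1 := eq_neg_of_add_eq_zero_left h
    right
    refine ⟨by rw [show (1 : ℂ) = -a by rw [ha1]; ring]; exact hhas₂,
      ha1 ▸ hhas₁, ?_, ?_⟩
    · intro hh
      have := huniq₂ _ hh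
      rw [ha1] at this
      norm_num at this
    · intro hh
      have := huniq₁ _ hh
      rw [ha1] at this
      norm_num at this
end

section
/- Let G be a group, H a normal subgroup of index 2, σ₀ an irreducible complex representation of H such that the induced representation σ = Ind_H^G(σ₀) is irreducible. Let U ≤ H be a subgroup, μ: U → ℂ× a character with dim Hom_U(σ₀, μ) = 1, and suppose U is normalized by an element ε ∈ G \ H with ε² = 1 and μ(ε⁻¹uε) = μ(u). Then Hom_{U⟨ε⟩}(σ, μ⁺) ≠ 0 and Hom_{U⟨ε⟩}(σ, μ⁻) ≠ 0, where μ^± are the two extensions of μ to U⟨ε⟩ with μ^±(ε) = ±1. -/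
/-- if `σ = Ind_H^G σ₀` is irreducible (realized concretely on `V × V`,
with `h ∈ H` acting by `σ₀(h) × σ₀(ε⁻¹hε)` and `ε` acting by the swap), and
`dim Hom_U(σ₀, μ) = 1`, then `σ` admits nonzero `μ⁺`- and `μ⁻`-equivariant
functionals, where `μ^±` are the extensions of `μ` to `U⟨ε⟩` with `μ^±(ε) = ±1`. -/
theorem stmt3 {G V : Type*} [Group G] [AddCommGroup V] [Module ℂ V]
    (H : Subgroup G) [H.Normal] (hidx : H.index = 2)
    (ε : G) (hεH : ε ∉ H) (hε2 : ε * ε = 1)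
    (σ₀ : Representation ℂ H V) (hirr₀ : IsIrredRep σ₀)
    (σ : Representation ℂ G (V × V))
    (hσH : ∀ (h : G) (hh : h ∈ H) (hh' : ε⁻¹ * h * ε ∈ H),
      σ h = LinearMap.prodMap (σ₀ ⟨h, hh⟩) (σ₀ ⟨ε⁻¹ * h * ε, hh'⟩))
    (hσε : ∀ v : V × V, σ ε v = (v.2, v.1))
    (hirr : IsIrredRep σ)
    (U : Subgroup G) (hUH : U ≤ H)
    (hUnorm : ∀ u ∈ U, ε⁻¹ * u * ε ∈ U)
    (μ : U →* ℂˣ)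
    (hμε : ∀ (u : G) (hu : u ∈ U) (hu' : ε⁻¹ * u * ε ∈ U),
      μ ⟨ε⁻¹ * u * ε, hu'⟩ = μ ⟨u, hu⟩)
    (hdim : ∃ ℓ₀ : V →ₗ[ℂ] ℂ, ℓ₀ ≠ 0 ∧
      (∀ (u : U) (v : V), ℓ₀ (σ₀ ⟨(u : G), hUH u.2⟩ v) = (μ u : ℂ) * ℓ₀ v) ∧
      ∀ ℓ : V →ₗ[ℂ] ℂ,
        (∀ (u : U) (v : V), ℓ (σ₀ ⟨(u : G), hUH u.2⟩ v) = (μ u : ℂ) * ℓ v) →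
        ∃ a : ℂ, ℓ = a • ℓ₀) :
    HasEqFunc σ U μ ε 1 ∧ HasEqFunc σ U μ ε (-1) := by
  obtain ⟨ℓ₀, hne, heq, -⟩ := hdim
  obtain ⟨v₀, hv₀⟩ : ∃ v, ℓ₀ v ≠ 0 := by
    by_contra h
    push_neg at h
    exact hne (LinearMap.ext fun v => h v)
  have key : ∀ (u : U) (w : V),
      ℓ₀ (σ₀ ⟨ε⁻¹ * (u : G) * ε, hUH (hUnorm u u.2)⟩ w) = (μ u : ℂ) * ℓ₀ w := by
    intro u w
    have := heq ⟨ε⁻¹ * (u : G) * ε, hUnorm u u.2⟩ w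
    rwa [hμε (u : G) u.2 (hUnorm u u.2)] at this
  constructor
  · refine ⟨ℓ₀.comp (LinearMap.fst ℂ V V) + ℓ₀.comp (LinearMap.snd ℂ V V), ?_, ?_, ?_⟩
    · intro h
      have := congrArg (fun f => f (v₀, 0)) h
      simp at this
      exact hv₀ this
    · intro u v
      rw [hσH (u : G) (hUH u.2) (hUH (hUnorm u u.2))]
      simp [LinearMap.prodMap, heq u v.1, key u v.2, mul_add]
    · intro v
      rw [hσε]
      simp [add_comm]
  · refine ⟨ℓ₀.comp (LinearMap.fst ℂ V V) - ℓ₀.comp (LinearMap.snd ℂ V V), ?_, ?_, ?_⟩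
    · intro h
      have := congrArg (fun f => f (v₀, 0)) h
      simp at this
      exact hv₀ this
    · intro u v
      rw [hσH (u : G) (hUH u.2) (hUH (hUnorm u u.2))]
      simp [LinearMap.prodMap, heq u v.1, key u v.2, mul_sub]
    · intro v
      rw [hσε]
      simp [neg_sub]
end
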